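/- Let p, q ∈ [0,1], p_min = min{p, q, 1−p, 1−q}, and (s_n) a sequence of nonnegative integers with √(s_n/p_min)·|p−q| → 0. Then the total variation distance between the distribution of s_n i.i.d. Bernoulli(p) random variables and s_n i.i.d. Bernoulli(q) random variables tends to 0 as n → ∞. In fact there is an absolute constant C such that this distance is at most C·√(s_n/p_min)·|p−q|. -/

import Mathlib

open Filter Topology
open scoped BigOperators

/-- The probability of the outcome `a` for `s` independent Bernoulli(`p`) variables. -/
noncomputable def bernProb (p : ℝ) (s : ℕ) (a : Fin s → Bool) : ℝ :=
  ∏ i : Fin s, (if a i then p else 1 - p)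

/-- The total variation distance between the laws of `s` i.i.d. Bernoulli(`p`) and
`s` i.i.d. Bernoulli(`q`) random variables: the supremum over events
`A ⊆ {0,1}^s` of the difference of their probabilities. -/
noncomputable def bernTV (p q : ℝ) (s : ℕ) : ℝ :=
  ⨆ A : Finset (Fin s → Bool),
    |∑ a ∈ A, bernProb p s a - ∑ a ∈ A, bernProb q s a|

/-- Let `p, q ∈ [0,1]`, `p_min = min{p, q, 1-p, 1-q} > 0`, and `(s_n)` nonnegative
integers with `√(s_n/p_min)·|p-q| → 0`.  Then the total variation distance between
`s_n` i.i.d. Bernoulli(`p`) and `s_n` i.i.d. Bernoulli(`q`) variables tends to `0`;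
in fact there is an absolute constant `C` bounding it by `C·√(s_n/p_min)·|p-q|`. -/
lemma sqrt_prod' {ι : Type*} (s : Finset ι) (f : ι → ℝ) (h : ∀ i ∈ s, 0 ≤ f i) :
    Real.sqrt (∏ i ∈ s, f i) = ∏ i ∈ s, Real.sqrt (f i) := by
  classical
  induction s using Finset.induction with
  | empty => simp
  | insert a t hx ih =>
    rw [Finset.prod_insert hx, Finset.prod_insert hx,
      Real.sqrt_mul (h a (Finset.mem_insert_self a t)),
      ih (fun i hi => h i (Finset.mem_insert_of_mem hi))]

lemma sq_sqrt_sub_le (m x y : ℝ) (hm : 0 < m) (hx : m ≤ x) (hy : m ≤ y) :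
    (Real.sqrt x - Real.sqrt y) ^ 2 ≤ (x - y) ^ 2 / (4 * m) := by
  have hx0 : 0 ≤ x := le_trans hm.le hx
  have hy0 : 0 ≤ y := le_trans hm.le hy
  have hxs := Real.sq_sqrt hx0
  have hys := Real.sq_sqrt hy0
  have h1 : Real.sqrt m ≤ Real.sqrt x := Real.sqrt_le_sqrt hx
  have h2 : Real.sqrt m ≤ Real.sqrt y := Real.sqrt_le_sqrt hy
  have hms := Real.sq_sqrt hm.le
  have hb : 4 * m ≤ (Real.sqrt x + Real.sqrt y) ^ 2 := by nlinarith [Real.sqrt_nonneg m]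
  have hab : (Real.sqrt x - Real.sqrt y) ^ 2 * ((Real.sqrt x + Real.sqrt y) ^ 2) =
      (x - y) ^ 2 := by nlinarith
  rw [le_div_iff₀ (by linarith)]
  nlinarith [sq_nonneg (Real.sqrt x - Real.sqrt y)]

lemma bernTV_le (p q : ℝ) (hm : 0 < min (min p q) (min (1 - p) (1 - q))) (s : ℕ) :
    bernTV p q s ≤ 2 * Real.sqrt ((s : ℝ) / min (min p q) (min (1 - p) (1 - q))) * |p - q| := by
  classical
  set m := min (min p q) (min (1 - p) (1 - q)) with hmdef
  have hmp : m ≤ p := le_trans (min_le_left _ _) (min_le_left _ _)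
  have hmq : m ≤ q := le_trans (min_le_left _ _) (min_le_right _ _)
  have hmp' : m ≤ 1 - p := le_trans (min_le_right _ _) (min_le_left _ _)
  have hmq' : m ≤ 1 - q := le_trans (min_le_right _ _) (min_le_right _ _)
  have hp0 : 0 < p := lt_of_lt_of_le hm hmp
  have hq0 : 0 < q := lt_of_lt_of_le hm hmq
  have hp1 : p < 1 := by linarith [lt_of_lt_of_le hm hmp']
  have hq1 : q < 1 := by linarith [lt_of_lt_of_le hm hmq']
  clear_value m
  set P : (Fin s → Bool) → ℝ := bernProb p s with hP
  set Q : (Fin s → Bool) → ℝ := bernProb q s with hQ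
  clear_value P Q
  have hPnn : ∀ a, 0 ≤ P a := fun a => by
    rw [hP, bernProb]; exact Finset.prod_nonneg fun i _ => by split <;> linarith
  have hQnn : ∀ a, 0 ≤ Q a := fun a => by
    rw [hQ, bernProb]; exact Finset.prod_nonneg fun i _ => by split <;> linarith
  -- total masses
  have hPsum : ∑ a : Fin s → Bool, P a = 1 := by
    have := (Fintype.prod_sum (ι := Fin s) (κ := fun _ => Bool)
      (f := fun _ b => if b then p else 1 - p)).symm
    simp only [hP, bernProb]
    rw [this]
    simp
  have hQsum : ∑ a : Fin s → Bool, Q a = 1 := by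
    have := (Fintype.prod_sum (ι := Fin s) (κ := fun _ => Bool)
      (f := fun _ b => if b then q else 1 - q)).symm
    simp only [hQ, bernProb]
    rw [this]
    simp
  set ρ : ℝ := Real.sqrt (p * q) + Real.sqrt ((1 - p) * (1 - q)) with hρ
  clear_value ρ
  have hρ0 : 0 ≤ ρ := by rw [hρ]; exact add_nonneg (Real.sqrt_nonneg _) (Real.sqrt_nonneg _)
  have hρ1 : ρ ≤ 1 := by
    have h1 : Real.sqrt (p * q) ≤ (p + q) / 2 := by
      rw [show (p + q) / 2 = Real.sqrt (((p + q) / 2) ^ 2) from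
        (Real.sqrt_sq (by linarith)).symm]
      exact Real.sqrt_le_sqrt (by nlinarith [sq_nonneg (p - q)])
    have h2 : Real.sqrt ((1 - p) * (1 - q)) ≤ ((1 - p) + (1 - q)) / 2 := by
      rw [show ((1 - p) + (1 - q)) / 2 = Real.sqrt ((((1 - p) + (1 - q)) / 2) ^ 2) from
        (Real.sqrt_sq (by linarith)).symm]
      exact Real.sqrt_le_sqrt (by nlinarith [sq_nonneg (p - q)])
    simp only [hρ]; linarith
  -- sum of sqrt(P*Q) = ρ ^ s
  have hsum_sqrt : ∑ a : Fin s → Bool, Real.sqrt (P a * Q a) = ρ ^ s := by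
    have key : ∀ a : Fin s → Bool, Real.sqrt (P a * Q a) =
        ∏ i : Fin s, Real.sqrt ((if a i then p else 1 - p) * (if a i then q else 1 - q)) := by
      intro a
      rw [hP, hQ, bernProb, bernProb, ← Finset.prod_mul_distrib]
      exact sqrt_prod' _ _ (fun i _ => by split <;> nlinarith)
    simp_rw [key]
    rw [← Fintype.prod_sum (ι := Fin s) (κ := fun _ => Bool)
      (f := fun _ b => Real.sqrt ((if b then p else 1 - p) * (if b then q else 1 - q)))]
    simp [hρ, add_comm]
  have hρs1 : ρ ^ s ≤ 1 := pow_le_one₀ hρ0 hρ1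
  have hρs0 : 0 ≤ ρ ^ s := pow_nonneg hρ0 s
  -- sums of squares
  have hS1 : ∑ a : Fin s → Bool, (Real.sqrt (P a) - Real.sqrt (Q a)) ^ 2 = 2 - 2 * ρ ^ s := by
    have expand : ∀ a : Fin s → Bool, (Real.sqrt (P a) - Real.sqrt (Q a)) ^ 2 =
        P a + Q a - 2 * Real.sqrt (P a * Q a) := by
      intro a
      rw [sub_sq, Real.sq_sqrt (hPnn a), Real.sq_sqrt (hQnn a),
        Real.sqrt_mul (hPnn a)]
      ring
    simp_rw [expand]
    rw [Finset.sum_sub_distrib, Finset.sum_add_distrib, hPsum, hQsum, ← Finset.mul_sum,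
      hsum_sqrt]
    ring
  have hS2 : ∑ a : Fin s → Bool, (Real.sqrt (P a) + Real.sqrt (Q a)) ^ 2 = 2 + 2 * ρ ^ s := by
    have expand : ∀ a : Fin s → Bool, (Real.sqrt (P a) + Real.sqrt (Q a)) ^ 2 =
        P a + Q a + 2 * Real.sqrt (P a * Q a) := by
      intro a
      rw [add_sq, Real.sq_sqrt (hPnn a), Real.sq_sqrt (hQnn a),
        Real.sqrt_mul (hPnn a)]
      ring
    simp_rw [expand]
    rw [Finset.sum_add_distrib, Finset.sum_add_distrib, hPsum, hQsum, ← Finset.mul_sum,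
      hsum_sqrt]
    ring
  -- L1 distance
  set L1 : ℝ := ∑ a : Fin s → Bool, |P a - Q a| with hL1
  clear_value L1
  have hL1nn : 0 ≤ L1 := by rw [hL1]; exact Finset.sum_nonneg fun a _ => abs_nonneg _
  have hL1sq : L1 ^ 2 ≤ (2 - 2 * ρ ^ s) * 4 := by
    have habs : ∀ a : Fin s → Bool, |P a - Q a| =
        |Real.sqrt (P a) - Real.sqrt (Q a)| * (Real.sqrt (P a) + Real.sqrt (Q a)) := by
      intro a
      have h1 : P a - Q a = (Real.sqrt (P a) - Real.sqrt (Q a)) *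
          (Real.sqrt (P a) + Real.sqrt (Q a)) := by
        have := Real.sq_sqrt (hPnn a); have := Real.sq_sqrt (hQnn a); nlinarith
      rw [h1, abs_mul, abs_of_nonneg (add_nonneg (Real.sqrt_nonneg _) (Real.sqrt_nonneg _))]
    have hCS := Finset.sum_mul_sq_le_sq_mul_sq Finset.univ
      (fun a : Fin s → Bool => |Real.sqrt (P a) - Real.sqrt (Q a)|)
      (fun a : Fin s → Bool => Real.sqrt (P a) + Real.sqrt (Q a))
    simp_rw [hL1, habs, sq_abs] at hCS ⊢
    calc (∑ a : Fin s → Bool, |Real.sqrt (P a) - Real.sqrt (Q a)| *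
          (Real.sqrt (P a) + Real.sqrt (Q a))) ^ 2
        ≤ (∑ a : Fin s → Bool, (Real.sqrt (P a) - Real.sqrt (Q a)) ^ 2) *
          ∑ a : Fin s → Bool, (Real.sqrt (P a) + Real.sqrt (Q a)) ^ 2 := hCS
      _ ≤ (2 - 2 * ρ ^ s) * 4 := by
          rw [hS1, hS2]
          have h1 : 0 ≤ 2 - 2 * ρ ^ s := by linarith
          nlinarith
  -- 1 - ρ ≤ (p-q)^2 / (4 m)
  have hone_sub : 2 - 2 * ρ ≤ (p - q) ^ 2 / (2 * m) := by
    have e1 : (Real.sqrt p - Real.sqrt q) ^ 2 = p + q - 2 * Real.sqrt (p * q) := by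
      rw [sub_sq, Real.sq_sqrt hp0.le, Real.sq_sqrt hq0.le, Real.sqrt_mul hp0.le]; ring
    have e2 : (Real.sqrt (1 - p) - Real.sqrt (1 - q)) ^ 2 =
        (1 - p) + (1 - q) - 2 * Real.sqrt ((1 - p) * (1 - q)) := by
      rw [sub_sq, Real.sq_sqrt (by linarith), Real.sq_sqrt (by linarith),
        Real.sqrt_mul (by linarith)]; ring
    have b1 := sq_sqrt_sub_le m p q hm hmp hmq
    have b2 := sq_sqrt_sub_le m (1 - p) (1 - q) hm hmp' hmq'
    have h4 : ((1 - p) - (1 - q)) ^ 2 = (p - q) ^ 2 := by ring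
    rw [h4] at b2
    have : 2 - 2 * ρ = (Real.sqrt p - Real.sqrt q) ^ 2 +
        (Real.sqrt (1 - p) - Real.sqrt (1 - q)) ^ 2 := by
      rw [e1, e2, hρ]; ring
    rw [this]
    have hm0 : (0 : ℝ) < m := hm
    have : (p - q) ^ 2 / (4 * m) + (p - q) ^ 2 / (4 * m) = (p - q) ^ 2 / (2 * m) := by
      field_simp; ring
    linarith
  -- Bernoulli inequality: 1 - ρ^s ≤ s (1 - ρ)
  have hbern : 2 - 2 * ρ ^ s ≤ (s : ℝ) * (2 - 2 * ρ) := by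
    have h2 := one_add_mul_le_pow (a := ρ - 1) (by linarith) s
    have h : (1 : ℝ) + (ρ - 1) = ρ := by ring
    rw [h] at h2
    linarith
  have hs0 : (0 : ℝ) ≤ (s : ℝ) := Nat.cast_nonneg s
  have hfinal : L1 ^ 2 ≤ (2 * Real.sqrt ((s : ℝ) / m) * |p - q|) ^ 2 := by
    have hstep : (s : ℝ) * (2 - 2 * ρ) ≤ (s : ℝ) * ((p - q) ^ 2 / (2 * m)) :=
      mul_le_mul_of_nonneg_left hone_sub hs0
    have hr : (2 * Real.sqrt ((s : ℝ) / m) * |p - q|) ^ 2 =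
        4 * ((s : ℝ) / m) * (p - q) ^ 2 := by
      rw [mul_pow, mul_pow, Real.sq_sqrt (by positivity), sq_abs]; norm_num
    rw [hr]
    have hpos : 0 ≤ (s : ℝ) / m * (p - q) ^ 2 := by positivity
    have heq : (s : ℝ) * ((p - q) ^ 2 / (2 * m)) * 4 = 2 * ((s : ℝ) / m * (p - q) ^ 2) := by
      rw [div_eq_mul_inv, div_eq_mul_inv, mul_inv]; ring
    have : (s : ℝ) * ((p - q) ^ 2 / (2 * m)) * 4 ≤ 4 * ((s : ℝ) / m) * (p - q) ^ 2 := by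
      rw [heq, mul_assoc]; linarith
    calc L1 ^ 2 ≤ (2 - 2 * ρ ^ s) * 4 := hL1sq
      _ ≤ ((s : ℝ) * (2 - 2 * ρ)) * 4 := by linarith
      _ ≤ ((s : ℝ) * ((p - q) ^ 2 / (2 * m))) * 4 := by linarith
      _ ≤ 4 * ((s : ℝ) / m) * (p - q) ^ 2 := this
  have hRnn : 0 ≤ 2 * Real.sqrt ((s : ℝ) / m) * |p - q| := by positivity
  have hL1le : L1 ≤ 2 * Real.sqrt ((s : ℝ) / m) * |p - q| := by
    have := Real.sqrt_le_sqrt hfinal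
    rwa [Real.sqrt_sq hL1nn, Real.sqrt_sq hRnn] at this
  -- bernTV ≤ L1
  have hTV : bernTV p q s ≤ L1 := by
    apply ciSup_le
    intro A
    rw [hL1, ← hP, ← hQ]
    calc |∑ a ∈ A, P a - ∑ a ∈ A, Q a|
        = |∑ a ∈ A, (P a - Q a)| := by rw [Finset.sum_sub_distrib]
      _ ≤ ∑ a ∈ A, |P a - Q a| := Finset.abs_sum_le_sum_abs _ _
      _ ≤ ∑ a : Fin s → Bool, |P a - Q a| :=
          Finset.sum_le_sum_of_subset_of_nonneg (Finset.subset_univ A)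
            (fun a _ _ => abs_nonneg _)
  linarith

lemma bernTV_nonneg (p q : ℝ) (s : ℕ) : 0 ≤ bernTV p q s := by
  classical
  have hbdd : BddAbove (Set.range fun A : Finset (Fin s → Bool) =>
      |∑ a ∈ A, bernProb p s a - ∑ a ∈ A, bernProb q s a|) := by
    refine ⟨∑ a : Fin s → Bool, |bernProb p s a - bernProb q s a|, ?_⟩
    rintro x ⟨A, rfl⟩
    calc |∑ a ∈ A, bernProb p s a - ∑ a ∈ A, bernProb q s a|
        = |∑ a ∈ A, (bernProb p s a - bernProb q s a)| := by rw [Finset.sum_sub_distrib]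
      _ ≤ ∑ a ∈ A, |bernProb p s a - bernProb q s a| := Finset.abs_sum_le_sum_abs _ _
      _ ≤ _ := Finset.sum_le_sum_of_subset_of_nonneg (Finset.subset_univ A)
            (fun a _ _ => abs_nonneg _)
  have := le_ciSup hbdd (∅ : Finset (Fin s → Bool))
  simpa [bernTV] using this

theorem firstOrderComplexity.bernoulli_tv_bound :
    ∃ C : ℝ, 0 < C ∧
      ∀ p q : ℝ, p ∈ Set.Icc (0 : ℝ) 1 → q ∈ Set.Icc (0 : ℝ) 1 →
        0 < min (min p q) (min (1 - p) (1 - q)) →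
        ∀ s : ℕ → ℕ,
          (∀ n, bernTV p q (s n)
            ≤ C * Real.sqrt ((s n : ℝ) / min (min p q) (min (1 - p) (1 - q))) * |p - q|) ∧
          (Tendsto
              (fun n => Real.sqrt ((s n : ℝ) / min (min p q) (min (1 - p) (1 - q))) * |p - q|)
              atTop (𝓝 0) →
            Tendsto (fun n => bernTV p q (s n)) atTop (𝓝 0)) := by
  refine ⟨2, by norm_num, fun p q hp hq hm s => ⟨fun n => bernTV_le p q hm (s n), fun ht => ?_⟩⟩
  have ht2 : Tendsto (fun n => 2 * (Real.sqrt ((s n : ℝ) / min (min p q) (min (1 - p) (1 - q)))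
      * |p - q|)) atTop (𝓝 0) := by
    simpa using ht.const_mul 2
  refine squeeze_zero (fun n => bernTV_nonneg p q (s n)) (fun n => ?_) ht2
  have := bernTV_le p q hm (s n)
  linarith [bernTV_le p q hm (s n)]
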